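/- Let p be a prime, r, m, u, v positive integers with 2 ≤ u ≤ v and 1 ≤ m < p^r, and a, b integers with p ∤ a, p ∤ b, p ∤ u. Then the polynomial F(x) = x^{p^r} + p^v a x^m + p^u b is irreducible over ℚ. -/

import Mathlib

open Polynomial

/-- Gauss-type lemma for the weight `i ↦ n·v_p(coeff i) + u·i` on `ℤ[X]`:
for a product `g * h` there is a coefficient achieving (at most) the sum of
the minimal weights of `g` and `h`. -/
private lemma gauss_weight (p n u : ℕ) (hp : p.Prime) (hn : 0 < n)
    (g h : Polynomial ℤ) (hg : g ≠ 0) (hh : h ≠ 0) :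
    ∃ k, (g * h).coeff k ≠ 0 ∧
      n * padicValInt p ((g * h).coeff k) + u * k ≤
      (g.support.inf' (Polynomial.nonempty_support_iff.mpr hg)
        fun i => n * padicValInt p (g.coeff i) + u * i)
      + (h.support.inf' (Polynomial.nonempty_support_iff.mpr hh)
        fun j => n * padicValInt p (h.coeff j) + u * j) := by
  haveI : Fact p.Prime := ⟨hp⟩
  set Mg := g.support.inf' (Polynomial.nonempty_support_iff.mpr hg)
      fun i => n * padicValInt p (g.coeff i) + u * i with hMg
  set Mh := h.support.inf' (Polynomial.nonempty_support_iff.mpr hh)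
      fun j => n * padicValInt p (h.coeff j) + u * j with hMh
  -- the set of indices where the minimum is attained, and its least element
  set Sg := g.support.filter (fun i => n * padicValInt p (g.coeff i) + u * i = Mg) with hSg
  set Sh := h.support.filter (fun j => n * padicValInt p (h.coeff j) + u * j = Mh) with hSh
  have hSgne : Sg.Nonempty := by
    obtain ⟨i, hi, hieq⟩ := Finset.exists_mem_eq_inf'
      (Polynomial.nonempty_support_iff.mpr hg)
      (fun i => n * padicValInt p (g.coeff i) + u * i)
    exact ⟨i, Finset.mem_filter.mpr ⟨hi, hieq.symm⟩⟩
  have hShne : Sh.Nonempty := by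
    obtain ⟨j, hj, hjeq⟩ := Finset.exists_mem_eq_inf'
      (Polynomial.nonempty_support_iff.mpr hh)
      (fun j => n * padicValInt p (h.coeff j) + u * j)
    exact ⟨j, Finset.mem_filter.mpr ⟨hj, hjeq.symm⟩⟩
  set i0 := Sg.min' hSgne with hi0def
  set j0 := Sh.min' hShne with hj0def
  have hi0mem : i0 ∈ Sg := Finset.min'_mem _ _
  have hj0mem : j0 ∈ Sh := Finset.min'_mem _ _
  have hi0supp : i0 ∈ g.support := (Finset.mem_filter.mp hi0mem).1
  have hj0supp : j0 ∈ h.support := (Finset.mem_filter.mp hj0mem).1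
  have hgi0 : g.coeff i0 ≠ 0 := Polynomial.mem_support_iff.mp hi0supp
  have hhj0 : h.coeff j0 ≠ 0 := Polynomial.mem_support_iff.mp hj0supp
  have hi0eq : n * padicValInt p (g.coeff i0) + u * i0 = Mg := (Finset.mem_filter.mp hi0mem).2
  have hj0eq : n * padicValInt p (h.coeff j0) + u * j0 = Mh := (Finset.mem_filter.mp hj0mem).2
  -- minimality below i0 / j0 : strict inequality
  have hgmin : ∀ i ∈ g.support, i < i0 → Mg < n * padicValInt p (g.coeff i) + u * i := by
    intro i hi hlt
    have hle : Mg ≤ n * padicValInt p (g.coeff i) + u * i := Finset.inf'_le _ hi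
    rcases lt_or_eq_of_le hle with h1 | h1
    · exact h1
    · exfalso
      have : i ∈ Sg := Finset.mem_filter.mpr ⟨hi, h1.symm⟩
      exact absurd (Finset.min'_le _ _ this) (by omega)
  have hhmin : ∀ j ∈ h.support, j < j0 → Mh < n * padicValInt p (h.coeff j) + u * j := by
    intro j hj hlt
    have hle : Mh ≤ n * padicValInt p (h.coeff j) + u * j := Finset.inf'_le _ hj
    rcases lt_or_eq_of_le hle with h1 | h1
    · exact h1
    · exfalso
      have : j ∈ Sh := Finset.mem_filter.mpr ⟨hj, h1.symm⟩
      exact absurd (Finset.min'_le _ _ this) (by omega)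
  set s := padicValInt p (g.coeff i0) + padicValInt p (h.coeff j0) with hs
  set k := i0 + j0 with hk
  -- all cross terms other than (i0, j0) are divisible by p^(s+1)
  have hcross : ∀ x ∈ Finset.HasAntidiagonal.antidiagonal k, x ≠ (i0, j0) →
      (p : ℤ) ^ (s + 1) ∣ g.coeff x.1 * h.coeff x.2 := by
    rintro ⟨i, j⟩ hx hne
    have hij : i + j = k := Finset.HasAntidiagonal.mem_antidiagonal.mp hx
    by_cases hgi : g.coeff i = 0
    · simp [hgi]
    by_cases hhj : h.coeff j = 0
    · simp [hhj]
    have hisupp : i ∈ g.support := Polynomial.mem_support_iff.mpr hgi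
    have hjsupp : j ∈ h.support := Polynomial.mem_support_iff.mpr hhj
    have hne' : i ≠ i0 ∨ j ≠ j0 := by
      by_contra hc
      push_neg at hc
      exact hne (by simp [hc.1, hc.2])
    have hcase : i < i0 ∨ j < j0 := by omega
    have hkey : s + 1 ≤ padicValInt p (g.coeff i) + padicValInt p (h.coeff j) := by
      have hgle : Mg ≤ n * padicValInt p (g.coeff i) + u * i := Finset.inf'_le _ hisupp
      have hhle : Mh ≤ n * padicValInt p (h.coeff j) + u * j := Finset.inf'_le _ hjsupp
      have hsum : n * s + u * k + 1 ≤ n * (padicValInt p (g.coeff i) + padicValInt p (h.coeff j)) + u * k := by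
        rcases hcase with hlt | hlt
        · have h1 := hgmin i hisupp hlt
          have e1 : n * s + u * k = Mg + Mh := by
            rw [← hi0eq, ← hj0eq, hs, hk]; ring
          have e2 : n * (padicValInt p (g.coeff i) + padicValInt p (h.coeff j)) + u * k
              = (n * padicValInt p (g.coeff i) + u * i) + (n * padicValInt p (h.coeff j) + u * j) := by
            rw [← hij]; ring
          rw [e1, e2]; omega
        · have h1 := hhmin j hjsupp hlt
          have e1 : n * s + u * k = Mg + Mh := by
            rw [← hi0eq, ← hj0eq, hs, hk]; ring
          have e2 : n * (padicValInt p (g.coeff i) + padicValInt p (h.coeff j)) + u * k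
              = (n * padicValInt p (g.coeff i) + u * i) + (n * padicValInt p (h.coeff j) + u * j) := by
            rw [← hij]; ring
          rw [e1, e2]; omega
      have : n * s < n * (padicValInt p (g.coeff i) + padicValInt p (h.coeff j)) := by omega
      exact Nat.lt_of_mul_lt_mul_left this
    calc (p : ℤ) ^ (s + 1) ∣ (p : ℤ) ^ (padicValInt p (g.coeff i) + padicValInt p (h.coeff j)) :=
          pow_dvd_pow _ hkey
      _ ∣ g.coeff i * h.coeff j := by
          rw [pow_add]
          exact mul_dvd_mul (padicValInt_dvd _) (padicValInt_dvd _)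
  -- the main term is not divisible by p^(s+1)
  have hmain : ¬ (p : ℤ) ^ (s + 1) ∣ g.coeff i0 * h.coeff j0 := by
    intro hdvd
    have hne0 : g.coeff i0 * h.coeff j0 ≠ 0 := mul_ne_zero hgi0 hhj0
    have := (padicValInt_dvd_iff (s + 1) _).mp hdvd
    rcases this with h0 | hle
    · exact hne0 h0
    · rw [padicValInt.mul hgi0 hhj0] at hle
      omega
  -- the coefficient at k is not divisible by p^(s+1)
  have hcoeffnd : ¬ (p : ℤ) ^ (s + 1) ∣ (g * h).coeff k := by
    intro hdvd
    rw [Polynomial.coeff_mul] at hdvd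
    have hmem : ((i0, j0) : ℕ × ℕ) ∈ Finset.HasAntidiagonal.antidiagonal k :=
      Finset.HasAntidiagonal.mem_antidiagonal.mpr rfl
    have hsplit : ∑ x ∈ (Finset.HasAntidiagonal.antidiagonal k).erase (i0, j0),
        g.coeff x.1 * h.coeff x.2 + g.coeff i0 * h.coeff j0
        = ∑ x ∈ Finset.HasAntidiagonal.antidiagonal k, g.coeff x.1 * h.coeff x.2 :=
      Finset.sum_erase_add _ _ hmem
    have hrest : (p : ℤ) ^ (s + 1) ∣ ∑ x ∈ (Finset.HasAntidiagonal.antidiagonal k).erase (i0, j0),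
        g.coeff x.1 * h.coeff x.2 := by
      refine Finset.dvd_sum ?_
      intro x hx
      exact hcross x (Finset.mem_of_mem_erase hx) (Finset.ne_of_mem_erase hx)
    apply hmain
    have : g.coeff i0 * h.coeff j0 =
        (∑ x ∈ Finset.HasAntidiagonal.antidiagonal k, g.coeff x.1 * h.coeff x.2)
        - ∑ x ∈ (Finset.HasAntidiagonal.antidiagonal k).erase (i0, j0), g.coeff x.1 * h.coeff x.2 := by
      rw [← hsplit]; ring
    rw [this]
    exact dvd_sub hdvd hrest
  have hkne : (g * h).coeff k ≠ 0 := by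
    intro h0
    exact hcoeffnd (h0 ▸ dvd_zero _)
  refine ⟨k, hkne, ?_⟩
  have hVle : padicValInt p ((g * h).coeff k) ≤ s := by
    by_contra hcon
    push_neg at hcon
    exact hcoeffnd ((padicValInt_dvd_iff (s + 1) _).mpr (Or.inr hcon))
  have : n * padicValInt p ((g * h).coeff k) + u * k ≤ n * s + u * k := by
    have := Nat.mul_le_mul_left n hVle
    omega
  refine this.trans ?_
  rw [← hi0eq, ← hj0eq, hs, hk]
  exact le_of_eq (by ring)

private lemma nat_squeeze (A B C D : ℕ) (h1 : A ≤ C) (h2 : B ≤ D)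
    (h3 : C + D ≤ A + B) : A = C ∧ B = D := by omega

theorem stmt_5 (p : ℕ) (hp : p.Prime) (r m u v : ℕ) (a b : ℤ)
    (hr : 0 < r) (hu2 : 2 ≤ u) (huv : u ≤ v) (hm1 : 1 ≤ m) (hm : m < p ^ r)
    (ha : ¬ (p : ℤ) ∣ a) (hb : ¬ (p : ℤ) ∣ b) (hpu : ¬ p ∣ u) :
    Irreducible (X ^ (p ^ r) + C ((p : ℚ) ^ v * (a : ℚ)) * X ^ m
      + C ((p : ℚ) ^ u * (b : ℚ))) := by
  haveI : Fact p.Prime := ⟨hp⟩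
  set n := p ^ r with hn
  have hn0 : 0 < n := pow_pos hp.pos r
  have hn2 : 2 ≤ n := by
    calc 2 ≤ p := hp.two_le
    _ ≤ p ^ r := Nat.le_self_pow (by omega) p
  have ha0 : a ≠ 0 := fun h => ha (h ▸ dvd_zero _)
  have hb0 : b ≠ 0 := fun h => hb (h ▸ dvd_zero _)
  have hppow0 : ∀ w : ℕ, ((p : ℤ)) ^ w ≠ 0 := fun w =>
    pow_ne_zero _ (Int.natCast_ne_zero.mpr hp.pos.ne')
  have hVpow : ∀ w : ℕ, ∀ c : ℤ, ¬ (p : ℤ) ∣ c → padicValInt p ((p : ℤ) ^ w * c) = w := by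
    intro w c hc
    have hc0 : c ≠ 0 := fun h => hc (h ▸ dvd_zero _)
    have h1 : padicValInt p ((p : ℤ) ^ w * c)
        = padicValInt p ((p : ℤ) ^ w) + padicValInt p c :=
      padicValInt.mul (hppow0 w) hc0
    rw [h1, padicValInt.eq_zero_of_not_dvd hc]
    have h2 : ((p : ℤ) ^ w) = ((p ^ w : ℕ) : ℤ) := by push_cast; ring
    simp only [h2, padicValInt.of_nat, padicValNat.prime_pow, add_zero]
  -- the integral model
  set f : Polynomial ℤ := X ^ n + C ((p : ℤ) ^ v * a) * X ^ m + C ((p : ℤ) ^ u * b)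
    with hf
  have hdeg : (C ((p : ℤ) ^ v * a) * X ^ m + C ((p : ℤ) ^ u * b)).degree < (n : WithBot ℕ) := by
    apply lt_of_le_of_lt (Polynomial.degree_add_le _ _)
    apply max_lt
    · apply lt_of_le_of_lt (Polynomial.degree_C_mul_X_pow_le m _)
      exact_mod_cast hm
    · apply lt_of_le_of_lt (Polynomial.degree_C_le)
      exact_mod_cast hn0
  have hfm : f.Monic := by
    have := Polynomial.monic_X_pow_add hdeg
    rwa [← add_assoc] at this
  have hfdeg : f.natDegree = n := by
    have hd : f.degree = n := by
      rw [hf, add_assoc, Polynomial.degree_add_eq_left_of_degree_lt, Polynomial.degree_X_pow]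
      rwa [Polynomial.degree_X_pow]
    exact Polynomial.natDegree_eq_of_degree_eq_some hd
  -- coefficients of f
  have hcoeff : ∀ k, f.coeff k = (if k = n then 1 else 0)
      + ((p : ℤ) ^ v * a) * (if k = m then 1 else 0)
      + (if k = 0 then (p : ℤ) ^ u * b else 0) := by
    intro k
    rw [hf]
    simp only [Polynomial.coeff_add, Polynomial.coeff_C_mul, Polynomial.coeff_X_pow,
      Polynomial.coeff_C]
  have hcoeff0 : f.coeff 0 = (p : ℤ) ^ u * b := by
    rw [hcoeff 0, if_neg (show ¬ (0 : ℕ) = n by omega),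
      if_neg (show ¬ (0 : ℕ) = m by omega), if_pos rfl]
    ring
  have hcoeffm : f.coeff m = (p : ℤ) ^ v * a := by
    rw [hcoeff m, if_neg (show ¬ m = n by omega),
      if_neg (show ¬ m = 0 by omega), if_pos rfl]
    ring
  have hcoeffn : f.coeff n = 1 := by
    have := hfm.coeff_natDegree
    rwa [hfdeg] at this
  have hcoeffother : ∀ k, k ≠ 0 → k ≠ m → k ≠ n → f.coeff k = 0 := by
    intro k h0 hm' hn'
    rw [hcoeff k, if_neg hn', if_neg hm', if_neg h0]
    ring
  -- lower bound on the Newton polygon of f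
  have hlow : ∀ k, f.coeff k ≠ 0 → n * u ≤ n * padicValInt p (f.coeff k) + u * k := by
    intro k hk
    by_cases h0 : k = 0
    · subst h0
      rw [hcoeff0, hVpow u b hb]
      exact Nat.le_add_right _ _
    · by_cases hm' : k = m
      · subst hm'
        rw [hcoeffm, hVpow v a ha]
        calc n * u ≤ n * v := Nat.mul_le_mul_left n huv
          _ ≤ n * v + u * k := Nat.le_add_right _ _
      · by_cases hn' : k = n
        · subst hn'
          rw [hcoeffn]
          have h1 : padicValInt p 1 = 0 := padicValInt.one
          rw [h1, Nat.mul_zero, Nat.zero_add, Nat.mul_comm]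
        · exact absurd (hcoeffother k h0 hm' hn') hk
    -- irreducibility of f over ℤ
  have hfirr : Irreducible f := by
    rw [hfm.irreducible_iff_natDegree]
    constructor
    · intro h1
      have := hfdeg
      rw [h1] at this
      simp at this
      omega
    · intro G H hG hH hGH
      by_contra hcon
      push_neg at hcon
      obtain ⟨hdG0, hdH0⟩ := hcon
      set dG := G.natDegree with hdG
      set dH := H.natDegree with hdH
      have hGne : G ≠ 0 := hG.ne_zero
      have hHne : H ≠ 0 := hH.ne_zero
      have hsumdeg : dG + dH = n := by
        have := hG.natDegree_mul hH
        rw [hGH, hfdeg] at this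
        omega
      obtain ⟨k, hk0, hkle⟩ := gauss_weight p n u hp hn0 G H hGne hHne
      set MG := G.support.inf' (Polynomial.nonempty_support_iff.mpr hGne)
          fun i => n * padicValInt p (G.coeff i) + u * i with hMG
      set MH := H.support.inf' (Polynomial.nonempty_support_iff.mpr hHne)
          fun j => n * padicValInt p (H.coeff j) + u * j with hMH
      -- upper bounds via leading coefficients
      have hMGle : MG ≤ u * dG := by
        have hmem : dG ∈ G.support := by
          rw [Polynomial.mem_support_iff, hG.coeff_natDegree]
          exact one_ne_zero
        have := Finset.inf'_le (fun i => n * padicValInt p (G.coeff i) + u * i) hmem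
        rwa [hG.coeff_natDegree, (padicValInt.one : padicValInt p 1 = 0), Nat.mul_zero, Nat.zero_add]
          at this
      have hMHle : MH ≤ u * dH := by
        have hmem : dH ∈ H.support := by
          rw [Polynomial.mem_support_iff, hH.coeff_natDegree]
          exact one_ne_zero
        have := Finset.inf'_le (fun j => n * padicValInt p (H.coeff j) + u * j) hmem
        rwa [hH.coeff_natDegree, (padicValInt.one : padicValInt p 1 = 0), Nat.mul_zero, Nat.zero_add]
          at this
      -- the Newton polygon forces MG + MH = u * n with equalities
      have hfk : f.coeff k ≠ 0 := by rwa [← hGH]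
      have hnuMGMH : n * u ≤ MG + MH := by
        have h1 := hlow k hfk
        have h2 : n * padicValInt p ((G * H).coeff k) + u * k ≤ MG + MH := hkle
        rw [hGH] at h2
        omega
      have hsum2 : u * dG + u * dH = u * n := by rw [← Nat.mul_add, hsumdeg]
      have hcomm : n * u = u * n := Nat.mul_comm n u
      have heq : MG = u * dG ∧ MH = u * dH := by
        apply nat_squeeze _ _ _ _ hMGle hMHle
        omega
      -- constant terms
      have hc0 : G.coeff 0 * H.coeff 0 = (p : ℤ) ^ u * b := by
        have := Polynomial.mul_coeff_zero G H
        rw [hGH, hcoeff0] at this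
        exact this.symm
      have hG0 : G.coeff 0 ≠ 0 := by
        intro h0
        apply mul_ne_zero (hppow0 u) hb0
        rw [← hc0, h0, zero_mul]
      have hH0 : H.coeff 0 ≠ 0 := by
        intro h0
        apply mul_ne_zero (hppow0 u) hb0
        rw [← hc0, h0, mul_zero]
      have hVsum : padicValInt p (G.coeff 0) + padicValInt p (H.coeff 0) = u := by
        have h1 : padicValInt p (G.coeff 0 * H.coeff 0) = padicValInt p (G.coeff 0) + padicValInt p (H.coeff 0) :=
          padicValInt.mul hG0 hH0
        rw [hc0, hVpow u b hb] at h1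
        omega
      have hMGc : MG ≤ n * padicValInt p (G.coeff 0) := by
        have hmem : 0 ∈ G.support := Polynomial.mem_support_iff.mpr hG0
        have := Finset.inf'_le (fun i => n * padicValInt p (G.coeff i) + u * i) hmem
        simp only [Nat.mul_zero, Nat.add_zero] at this
        exact this
      have hMHc : MH ≤ n * padicValInt p (H.coeff 0) := by
        have hmem : 0 ∈ H.support := Polynomial.mem_support_iff.mpr hH0
        have := Finset.inf'_le (fun j => n * padicValInt p (H.coeff j) + u * j) hmem
        simp only [Nat.mul_zero, Nat.add_zero] at this
        exact this
      have hnVsum : n * padicValInt p (G.coeff 0) + n * padicValInt p (H.coeff 0) = n * u := by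
        rw [← Nat.mul_add, hVsum]
      -- squeeze again: n * padicValInt p (G.coeff 0) = MG = u * dG
      have heq2 : MG = n * padicValInt p (G.coeff 0) ∧ MH = n * padicValInt p (H.coeff 0) := by
        apply nat_squeeze _ _ _ _ hMGc hMHc
        have : MG + MH = u * n := by omega
        omega
      have hfinal : n * padicValInt p (G.coeff 0) = u * dG := by
        rw [← heq2.1, heq.1]
      -- divisibility: p^r ∣ dG
      have hdvd : n ∣ u * dG := ⟨padicValInt p (G.coeff 0), by omega⟩
      have hcop : Nat.Coprime n u := by
        apply Nat.Coprime.pow_left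
        exact (Nat.Prime.coprime_iff_not_dvd hp).mpr hpu
      have : n ∣ dG := hcop.dvd_of_dvd_mul_left hdvd
      have : n ≤ dG := Nat.le_of_dvd (by omega) this
      omega
  -- transfer to ℚ
  have hmap : (X ^ n + C ((p : ℚ) ^ v * (a : ℚ)) * X ^ m
      + C ((p : ℚ) ^ u * (b : ℚ))) = f.map (algebraMap ℤ ℚ) := by
    have harg1 : ((p : ℚ) ^ v * (a : ℚ)) = algebraMap ℤ ℚ ((p : ℤ) ^ v * a) := by
      simp only [algebraMap_int_eq, eq_intCast]
      push_cast
      ring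
    have harg2 : ((p : ℚ) ^ u * (b : ℚ)) = algebraMap ℤ ℚ ((p : ℤ) ^ u * b) := by
      simp only [algebraMap_int_eq, eq_intCast]
      push_cast
      ring
    rw [hf]
    simp only [Polynomial.map_add, Polynomial.map_mul, Polynomial.map_pow,
      Polynomial.map_X, Polynomial.map_C]
    rw [← harg1, ← harg2]
  rw [hmap]
  exact (hfm.irreducible_iff_irreducible_map_fraction_map).mp hfirr
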